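/- Let p be prime and a, b, m, n ∈ {1,...,p-1} with a ≠ b and (m,n) ≠ (p-1,p-1). Then the sum over k from 0 to p-1 of (a+k)^m · (b+k)^n is congruent mod p to -(a-b)^(m+n) · C(m, p-1-n). -/

import Mathlib

open Finset

lemma sum_pow_zmod (p : ℕ) [Fact p.Prime] (i : ℕ) (hi : 0 < i) :
    ∑ x : ZMod p, x ^ i = if p - 1 ∣ i then -1 else 0 := by
  classical
  have h0 : (0 : ZMod p) ^ i = 0 := zero_pow hi.ne'
  let φ : (ZMod p)ˣ ↪ ZMod p := ⟨fun x ↦ x, Units.val_injective⟩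
  have hmap : univ.map φ = univ \ {0} := by
    ext x
    simpa only [mem_map, mem_univ, Function.Embedding.coeFn_mk, true_and, mem_sdiff,
      mem_singleton, φ, IsUnit, ne_eq] using isUnit_iff_ne_zero
  have := FiniteField.sum_pow_units (ZMod p) i
  rw [ZMod.card] at this
  calc ∑ x : ZMod p, x ^ i
      = ∑ x ∈ univ \ {0}, x ^ i + ∑ x ∈ {0}, x ^ i := by
        rw [← Finset.sum_sdiff (Finset.subset_univ {0})]
    _ = ∑ x : (ZMod p)ˣ, (x : ZMod p) ^ i := by
        rw [Finset.sum_singleton, h0, add_zero, ← hmap, Finset.sum_map]; rfl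
    _ = _ := this

theorem sum_product_two_shifts (p a b m n : ℕ) (hp : p.Prime)
    (ha : 1 ≤ a ∧ a ≤ p - 1) (hb : 1 ≤ b ∧ b ≤ p - 1) (hab : a ≠ b)
    (hm : 1 ≤ m ∧ m ≤ p - 1) (hn : 1 ≤ n ∧ n ≤ p - 1)
    (h : ¬(m = p - 1 ∧ n = p - 1)) :
    (∑ k ∈ Finset.range p,
        ((a : ZMod p) + (k : ZMod p)) ^ m * ((b : ZMod p) + (k : ZMod p)) ^ n) =
      -((a : ZMod p) - (b : ZMod p)) ^ (m + n) * (m.choose (p - 1 - n) : ZMod p) := by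
  classical
  haveI : Fact p.Prime := ⟨hp⟩
  have hp2 : 2 ≤ p := hp.two_le
  obtain ⟨ha1, ha2⟩ := ha
  obtain ⟨hb1, hb2⟩ := hb
  obtain ⟨hm1, hm2⟩ := hm
  obtain ⟨hn1, hn2⟩ := hn
  have hp3 : 3 ≤ p := by omega
  set c : ZMod p := (a : ZMod p) - b with hc_def
  have hcast : (a : ZMod p) ≠ (b : ZMod p) := by
    intro hh
    apply hab
    have : (a : ZMod p).val = (b : ZMod p).val := by rw [hh]
    rwa [ZMod.val_cast_of_lt (by omega), ZMod.val_cast_of_lt (by omega)] at this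
  have hc : c ≠ 0 := sub_ne_zero.mpr hcast
  have hcp : c ^ (p - 1) = 1 := ZMod.pow_card_sub_one_eq_one hc
  -- reindex over all of ZMod p
  have step1 : (∑ k ∈ Finset.range p,
        ((a : ZMod p) + (k : ZMod p)) ^ m * ((b : ZMod p) + (k : ZMod p)) ^ n)
      = ∑ x : ZMod p, ((a : ZMod p) + x) ^ m * ((b : ZMod p) + x) ^ n := by
    exact Finset.sum_nbij' (fun k => ((k : ℕ) : ZMod p)) (fun x => x.val)
      (fun k _ => Finset.mem_univ _)
      (fun x _ => Finset.mem_range.mpr (ZMod.val_lt x))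
      (fun k hk => ZMod.val_cast_of_lt (Finset.mem_range.mp hk))
      (fun x _ => by simp [ZMod.natCast_val, ZMod.cast_id])
      (fun k _ => rfl)
  rw [step1]
  -- shift variable
  have step2 : ∑ x : ZMod p, ((a : ZMod p) + x) ^ m * ((b : ZMod p) + x) ^ n
      = ∑ y : ZMod p, (y + c) ^ m * y ^ n := by
    apply Fintype.sum_equiv (Equiv.addLeft (b : ZMod p))
    intro x
    have : (a : ZMod p) + x = ((b : ZMod p) + x) + c := by rw [hc_def]; ring
    rw [this]; rfl
  rw [step2]
  -- expand binomial and swap sums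
  have step3 : ∑ y : ZMod p, (y + c) ^ m * y ^ n
      = ∑ j ∈ Finset.range (m + 1),
          c ^ (m - j) * (m.choose j : ZMod p) * (if p - 1 ∣ j + n then -1 else 0) := by
    simp_rw [add_pow, Finset.sum_mul]
    rw [Finset.sum_comm]
    refine Finset.sum_congr rfl fun j _ => ?_
    rw [← sum_pow_zmod p (j + n) (by omega), Finset.mul_sum]
    refine Finset.sum_congr rfl fun y _ => ?_
    rw [pow_add]; ring
  rw [step3]
  by_cases hcase : p - 1 ≤ m + n
  · -- single nonzero term at j₀ = p - 1 - n
    set j₀ := p - 1 - n with hj0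
    have hj0m : j₀ ≤ m := by omega
    rw [Finset.sum_eq_single j₀]
    · have hdvd : p - 1 ∣ j₀ + n := by
        have : j₀ + n = p - 1 := by omega
        rw [this]
      rw [if_pos hdvd]
      have hpow : c ^ (m + n) = c ^ (m - j₀) := by
        have : m + n = (m - j₀) + (p - 1) := by omega
        rw [this, pow_add, hcp, mul_one]
      rw [hpow]; ring
    · intro j hj hne
      rw [Finset.mem_range] at hj
      have hnd : ¬ p - 1 ∣ j + n := by
        rintro ⟨q, hq⟩
        have hq2 : q ≤ 2 := by
          by_contra hq3
          push_neg at hq3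
          have : 3 * (p - 1) ≤ (p - 1) * q := by
            calc 3 * (p - 1) ≤ q * (p - 1) := Nat.mul_le_mul_right _ hq3
            _ = (p - 1) * q := Nat.mul_comm _ _
          omega
        interval_cases q <;> omega
      rw [if_neg hnd, mul_zero]
    · intro hni
      exact absurd (Finset.mem_range.mpr (by omega)) hni
  · -- all terms vanish, and the RHS binomial coefficient is zero
    push_neg at hcase
    have hch : m.choose (p - 1 - n) = 0 := Nat.choose_eq_zero_of_lt (by omega)
    rw [hch]
    push_cast
    rw [mul_zero]
    apply Finset.sum_eq_zero
    intro j hj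
    rw [Finset.mem_range] at hj
    have hnd : ¬ p - 1 ∣ j + n := by
      rintro ⟨q, hq⟩
      have hq2 : q ≤ 1 := by
        by_contra hq3
        push_neg at hq3
        have : 2 * (p - 1) ≤ (p - 1) * q := by
          calc 2 * (p - 1) ≤ q * (p - 1) := Nat.mul_le_mul_right _ hq3
          _ = (p - 1) * q := Nat.mul_comm _ _
        omega
      interval_cases q <;> omega
    rw [if_neg hnd, mul_zero]
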